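/- For every ε > 0 there exists a natural number N depending only on ε with the following property: for all ω > 0, all d > 1 and all h₁, h₂ > 0 satisfying d ≥ 2·(max(h₁,h₂))², there exist complex-valued functions α₁,…,α_N on R₁ and β₁,…,β_N on R₂ such that |exp(iω(‖x−y‖ − (x₁ − y₁))) − Σ_{i=1}^N αᵢ(x)βᵢ(y)| ≤ ε for all x ∈ R₁, y ∈ R₂. -/

import Mathlib

open Real

/-- The rectangle `R₁ = [dλ/2, 3dλ/2] × [−hλ/2, hλ/2]` with `λ = 2π/ω`. -/
noncomputable def rectR1 (ω d h : ℝ) : Set (EuclideanSpace ℝ (Fin 2)) :=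
  {x | x 0 ∈ Set.Icc (d * (2 * Real.pi / ω) / 2) (3 * d * (2 * Real.pi / ω) / 2) ∧
       x 1 ∈ Set.Icc (-(h * (2 * Real.pi / ω) / 2)) (h * (2 * Real.pi / ω) / 2)}

/-- The rectangle `R₂ = [−3dλ/2, −dλ/2] × [−hλ/2, hλ/2]` with `λ = 2π/ω`. -/
noncomputable def rectR2 (ω d h : ℝ) : Set (EuclideanSpace ℝ (Fin 2)) :=
  {y | y 0 ∈ Set.Icc (-(3 * d * (2 * Real.pi / ω) / 2)) (-(d * (2 * Real.pi / ω) / 2)) ∧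
       y 1 ∈ Set.Icc (-(h * (2 * Real.pi / ω) / 2)) (h * (2 * Real.pi / ω) / 2)}

namespace ResidualLowrank

/-- The rescaled phase on ℝ⁵ with coordinates `(p, q, a, b, δ)`. -/
noncomputable def phi (u : Fin 5 → ℝ) : ℝ :=
  (u 0 - u 1) ^ 2 /
    ((u 2 - u 3) * (1 + Real.sqrt (1 + (u 0 - u 1) ^ 2 * u 4 / (u 2 - u 3) ^ 2)))

/-- The fixed compact parameter box. -/
def Kset : Set (Fin 5 → ℝ) :=
  Set.Icc ![-1, -1, 1 / 2, -(3 / 2), 0] ![1, 1, 3 / 2, -(1 / 2), 1]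

lemma mem_Kset {u : Fin 5 → ℝ} :
    u ∈ Kset ↔ (-1 ≤ u 0 ∧ u 0 ≤ 1) ∧ (-1 ≤ u 1 ∧ u 1 ≤ 1) ∧
      (1 / 2 ≤ u 2 ∧ u 2 ≤ 3 / 2) ∧ (-(3 / 2) ≤ u 3 ∧ u 3 ≤ -(1 / 2)) ∧
      (0 ≤ u 4 ∧ u 4 ≤ 1) := by
  simp only [Kset, Set.mem_Icc, Pi.le_def, Fin.forall_fin_succ, Fin.forall_fin_zero_pi]
  simp [Matrix.cons_val_zero, Matrix.cons_val_one]
  tauto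

lemma sub23_pos {u : Fin 5 → ℝ} (hu : u ∈ Kset) : (1 : ℝ) ≤ u 2 - u 3 := by
  rw [mem_Kset] at hu
  linarith [hu.2.2.1.1, hu.2.2.2.1.2]

lemma denom_pos {u : Fin 5 → ℝ} (hu : u ∈ Kset) :
    0 < (u 2 - u 3) * (1 + Real.sqrt (1 + (u 0 - u 1) ^ 2 * u 4 / (u 2 - u 3) ^ 2)) := by
  have h1 := sub23_pos hu
  have h2 : (0 : ℝ) ≤ Real.sqrt (1 + (u 0 - u 1) ^ 2 * u 4 / (u 2 - u 3) ^ 2) :=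
    Real.sqrt_nonneg _
  nlinarith

lemma continuousOn_phi : ContinuousOn phi Kset := by
  apply ContinuousOn.div
  · fun_prop
  · apply ContinuousOn.mul (by fun_prop)
    apply ContinuousOn.add continuousOn_const
    apply Real.continuous_sqrt.comp_continuousOn
    apply ContinuousOn.add continuousOn_const
    apply ContinuousOn.div (by fun_prop) (by fun_prop)
    intro u hu
    have := sub23_pos hu
    positivity
  · intro u hu
    exact (denom_pos hu).ne'

instance : CompactSpace Kset := isCompact_iff_compactSpace.mp isCompact_Icc

/-- Coordinate functions on `Kset`. -/
noncomputable def coordFn (j : Fin 5) : C(Kset, ℝ) :=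
  ⟨fun u => (u : Fin 5 → ℝ) j, (continuous_apply j).comp continuous_subtype_val⟩

noncomputable def polyAlg : Subalgebra ℝ C(Kset, ℝ) := (MvPolynomial.aeval coordFn).range

lemma polyAlg_sep : polyAlg.SeparatesPoints := by
  intro x y hxy
  have hne : (x : Fin 5 → ℝ) ≠ y := fun h => hxy (Subtype.ext h)
  obtain ⟨j, hj⟩ := Function.ne_iff.mp hne
  exact ⟨coordFn j, ⟨coordFn j, ⟨MvPolynomial.X j, MvPolynomial.aeval_X coordFn j⟩, rfl⟩, hj⟩

lemma aeval_coordFn_apply (P : MvPolynomial (Fin 5) ℝ) (u : Kset) :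
    (MvPolynomial.aeval coordFn P) u = MvPolynomial.eval (u : Fin 5 → ℝ) P := by
  have h := MvPolynomial.comp_aeval_apply (f := coordFn)
    (ContinuousMap.evalAlgHom ℝ ℝ u) P
  rw [show ((MvPolynomial.aeval coordFn P) u) = (ContinuousMap.evalAlgHom ℝ ℝ u)
    (MvPolynomial.aeval coordFn P) from rfl, h]
  rw [MvPolynomial.aeval_def, MvPolynomial.eval, Algebra.algebraMap_self]
  rfl

/-- Polynomial approximation on `Kset` of a continuous function of the phase. -/
lemma exists_poly (g : ℝ → ℝ) (hg : Continuous g) (ε : ℝ) (hε : 0 < ε) :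
    ∃ P : MvPolynomial (Fin 5) ℝ, ∀ u : Fin 5 → ℝ, u ∈ Kset →
      |g (phi u) - MvPolynomial.eval u P| ≤ ε := by
  have hc : Continuous (fun u : Kset => g (phi u)) := by
    have h1 : Continuous (Kset.restrict phi) := continuousOn_phi.restrict
    exact hg.comp h1
  obtain ⟨gA, hgA⟩ := ContinuousMap.exists_mem_subalgebra_near_continuous_of_separatesPoints
    polyAlg polyAlg_sep (fun u : Kset => g (phi u)) hc ε hε
  obtain ⟨P, hP⟩ := gA.2
  refine ⟨P, fun u hu => ?_⟩
  have h := hgA ⟨u, hu⟩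
  have h2 : (gA : C(Kset, ℝ)) ⟨u, hu⟩ = MvPolynomial.eval u P := by
    rw [← hP]; exact aeval_coordFn_apply P ⟨u, hu⟩
  rw [Real.norm_eq_abs] at h
  rw [abs_sub_comm]
  rw [h2] at h
  exact h.le

lemma sqrt_sub_eq (s v : ℝ) (hs : 0 < s) :
    Real.sqrt (s ^ 2 + v ^ 2) - s = v ^ 2 / (s * (1 + Real.sqrt (1 + v ^ 2 / s ^ 2))) := by
  have h0 : s ^ 2 + v ^ 2 = s ^ 2 * (1 + v ^ 2 / s ^ 2) := by field_simp
  have h1 : Real.sqrt (s ^ 2 + v ^ 2) = s * Real.sqrt (1 + v ^ 2 / s ^ 2) := by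
    rw [h0, Real.sqrt_mul (sq_nonneg s), Real.sqrt_sq hs.le]
  set t := Real.sqrt (1 + v ^ 2 / s ^ 2) with ht
  have h2 : t ^ 2 = 1 + v ^ 2 / s ^ 2 := Real.sq_sqrt (by positivity)
  have h3 : (0:ℝ) < 1 + t := by positivity
  rw [h1, eq_div_iff (by positivity)]
  nlinarith [h2, sq_nonneg s]

/-- The scalar form of the phase identity. -/
lemma phase_scalar (ω d s v : ℝ) (hω : 0 < ω) (hd : 1 < d) (hs : 0 < s) :
    ω * (Real.sqrt (s ^ 2 + v ^ 2) - s) =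
      2 * π * ((v / (2 * π / ω * Real.sqrt d)) ^ 2 /
        ((s / (d * (2 * π / ω))) *
          (1 + Real.sqrt (1 + (v / (2 * π / ω * Real.sqrt d)) ^ 2 * d⁻¹ /
            (s / (d * (2 * π / ω))) ^ 2)))) := by
  have hπ := Real.pi_pos
  have hd0 : (0:ℝ) < d := lt_trans one_pos hd
  have hsd : 0 < Real.sqrt d := Real.sqrt_pos.mpr hd0
  have hsd2 : Real.sqrt d ^ 2 = d := Real.sq_sqrt hd0.le
  set c := Real.sqrt d with hc
  have harg : (v / (2 * π / ω * c)) ^ 2 * d⁻¹ / (s / (d * (2 * π / ω))) ^ 2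
      = v ^ 2 / s ^ 2 := by
    field_simp
    linear_combination (-v^2) * hsd2
  rw [harg, sqrt_sub_eq s v hs]
  set t := Real.sqrt (1 + v ^ 2 / s ^ 2) with htt
  have ht0 : (0:ℝ) ≤ t := Real.sqrt_nonneg _
  have h3 : (0:ℝ) < 1 + t := by positivity
  field_simp
  linear_combination v^2 * hsd2

/-- Points in `R₁` and `R₂` are horizontally separated. -/
lemma sep_pos (ω d h₁ h₂ : ℝ) (hω : 0 < ω) (hd : 1 < d)
    (x y : EuclideanSpace ℝ (Fin 2)) (hx : x ∈ rectR1 ω d h₁) (hy : y ∈ rectR2 ω d h₂) :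
    0 < x 0 - y 0 := by
  have hπ := Real.pi_pos
  have hd0 : (0:ℝ) < d := lt_trans one_pos hd
  have hdl : 0 < d * (2 * π / ω) := by positivity
  obtain ⟨⟨hx01, _⟩, _⟩ := hx
  obtain ⟨⟨_, hy02⟩, _⟩ := hy
  linarith

/-- Norm formula in the plane. -/
lemma norm_formula (x y : EuclideanSpace ℝ (Fin 2)) :
    ‖x - y‖ = Real.sqrt ((x 0 - y 0) ^ 2 + (x 1 - y 1) ^ 2) := by
  rw [EuclideanSpace.norm_eq]
  congr 1
  rw [Fin.sum_univ_two]
  simp [Real.norm_eq_abs, sq_abs]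

/-- The vector form of the phase identity. -/
lemma phase_vec (ω d h₁ h₂ : ℝ) (hω : 0 < ω) (hd : 1 < d)
    (x y : EuclideanSpace ℝ (Fin 2)) (hx : x ∈ rectR1 ω d h₁) (hy : y ∈ rectR2 ω d h₂) :
    ω * (‖x - y‖ - (x 0 - y 0)) = 2 * π *
      phi ![x 1 / (2 * π / ω * Real.sqrt d), y 1 / (2 * π / ω * Real.sqrt d),
        x 0 / (d * (2 * π / ω)), y 0 / (d * (2 * π / ω)), d⁻¹] := by
  have hs := sep_pos ω d h₁ h₂ hω hd x y hx hy
  rw [norm_formula]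
  unfold phi
  have e0 : (![x 1 / (2 * π / ω * Real.sqrt d), y 1 / (2 * π / ω * Real.sqrt d),
      x 0 / (d * (2 * π / ω)), y 0 / (d * (2 * π / ω)), d⁻¹] : Fin 5 → ℝ) 0
      = x 1 / (2 * π / ω * Real.sqrt d) := rfl
  have e1 : (![x 1 / (2 * π / ω * Real.sqrt d), y 1 / (2 * π / ω * Real.sqrt d),
      x 0 / (d * (2 * π / ω)), y 0 / (d * (2 * π / ω)), d⁻¹] : Fin 5 → ℝ) 1
      = y 1 / (2 * π / ω * Real.sqrt d) := rfl
  have e2 : (![x 1 / (2 * π / ω * Real.sqrt d), y 1 / (2 * π / ω * Real.sqrt d),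
      x 0 / (d * (2 * π / ω)), y 0 / (d * (2 * π / ω)), d⁻¹] : Fin 5 → ℝ) 2
      = x 0 / (d * (2 * π / ω)) := rfl
  have e3 : (![x 1 / (2 * π / ω * Real.sqrt d), y 1 / (2 * π / ω * Real.sqrt d),
      x 0 / (d * (2 * π / ω)), y 0 / (d * (2 * π / ω)), d⁻¹] : Fin 5 → ℝ) 3
      = y 0 / (d * (2 * π / ω)) := rfl
  have e4 : (![x 1 / (2 * π / ω * Real.sqrt d), y 1 / (2 * π / ω * Real.sqrt d),
      x 0 / (d * (2 * π / ω)), y 0 / (d * (2 * π / ω)), d⁻¹] : Fin 5 → ℝ) 4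
      = d⁻¹ := rfl
  rw [e0, e1, e2, e3, e4, div_sub_div_same, div_sub_div_same]
  exact phase_scalar ω d (x 0 - y 0) (x 1 - y 1) hω hd hs

/-- Membership of the rescaled variables in the fixed box. -/
lemma mem_aux (ω d h₁ h₂ : ℝ) (hω : 0 < ω) (hd : 1 < d) (hh₁ : 0 < h₁) (hh₂ : 0 < h₂)
    (hdh : 2 * max h₁ h₂ ^ 2 ≤ d)
    (x y : EuclideanSpace ℝ (Fin 2)) (hx : x ∈ rectR1 ω d h₁) (hy : y ∈ rectR2 ω d h₂) :
    ![x 1 / (2 * π / ω * Real.sqrt d), y 1 / (2 * π / ω * Real.sqrt d),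
      x 0 / (d * (2 * π / ω)), y 0 / (d * (2 * π / ω)), d⁻¹] ∈ Kset := by
  have hπ := Real.pi_pos
  have hd0 : (0:ℝ) < d := lt_trans one_pos hd
  have hsd : 0 < Real.sqrt d := Real.sqrt_pos.mpr hd0
  have hsd2 : Real.sqrt d ^ 2 = d := Real.sq_sqrt hd0.le
  have hlam : (0:ℝ) < 2 * π / ω := by positivity
  have hls : (0:ℝ) < 2 * π / ω * Real.sqrt d := by positivity
  have hdl : (0:ℝ) < d * (2 * π / ω) := by positivity
  obtain ⟨⟨hx01, hx02⟩, hx11, hx12⟩ := hx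
  obtain ⟨⟨hy01, hy02⟩, hy11, hy12⟩ := hy
  have hb1 : h₁ ≤ 2 * Real.sqrt d := by
    have h1m : h₁ ^ 2 ≤ (max h₁ h₂) ^ 2 :=
      pow_le_pow_left₀ hh₁.le (le_max_left _ _) 2
    nlinarith
  have hb2 : h₂ ≤ 2 * Real.sqrt d := by
    have h2m : h₂ ^ 2 ≤ (max h₁ h₂) ^ 2 :=
      pow_le_pow_left₀ hh₂.le (le_max_right _ _) 2
    nlinarith
  rw [mem_Kset]
  refine ⟨⟨?_, ?_⟩, ⟨?_, ?_⟩, ⟨?_, ?_⟩, ⟨?_, ?_⟩, ?_, ?_⟩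
  · show (-1:ℝ) ≤ x 1 / (2 * π / ω * Real.sqrt d)
    rw [le_div_iff₀ hls]; nlinarith
  · show x 1 / (2 * π / ω * Real.sqrt d) ≤ 1
    rw [div_le_one hls]; nlinarith
  · show (-1:ℝ) ≤ y 1 / (2 * π / ω * Real.sqrt d)
    rw [le_div_iff₀ hls]; nlinarith
  · show y 1 / (2 * π / ω * Real.sqrt d) ≤ 1
    rw [div_le_one hls]; nlinarith
  · show (1:ℝ)/2 ≤ x 0 / (d * (2 * π / ω))
    rw [le_div_iff₀ hdl]; linarith
  · show x 0 / (d * (2 * π / ω)) ≤ 3/2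
    rw [div_le_iff₀ hdl]; linarith
  · show -(3/2 : ℝ) ≤ y 0 / (d * (2 * π / ω))
    rw [le_div_iff₀ hdl]; linarith
  · show y 0 / (d * (2 * π / ω)) ≤ -(1/2 : ℝ)
    rw [div_le_iff₀ hdl]; linarith
  · show (0:ℝ) ≤ d⁻¹
    positivity
  · show (d:ℝ)⁻¹ ≤ 1
    exact inv_le_one_of_one_le₀ hd.le

end ResidualLowrank

open ResidualLowrank in
/-- For every `ε > 0` there is an `N` depending only on `ε` such that for all admissible
`ω, d, h₁, h₂`, the residual oscillatory factor `exp(iω(‖x−y‖ − (x₁−y₁)))` admits an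
`N`-term separated approximation on `R₁ × R₂` with accuracy `ε`. -/
theorem residual_factor_lowrank (ε : ℝ) (hε : 0 < ε) :
    ∃ N : ℕ, ∀ ω d h₁ h₂ : ℝ, 0 < ω → 1 < d → 0 < h₁ → 0 < h₂ →
      2 * max h₁ h₂ ^ 2 ≤ d →
      ∃ α β : Fin N → EuclideanSpace ℝ (Fin 2) → ℂ,
        ∀ x ∈ rectR1 ω d h₁, ∀ y ∈ rectR2 ω d h₂,
          ‖(Complex.exp (Complex.I * ((ω * (‖x - y‖ - (x 0 - y 0)) : ℝ) : ℂ)) -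
              ∑ i, α i x * β i y)‖ ≤ ε := by
  obtain ⟨P, hP⟩ := exists_poly (fun t => Real.cos (2 * π * t)) (by fun_prop) (ε / 2)
    (by positivity)
  obtain ⟨Q, hQ⟩ := exists_poly (fun t => Real.sin (2 * π * t)) (by fun_prop) (ε / 2)
    (by positivity)
  classical
  set S : Finset (Fin 5 →₀ ℕ) := P.support ∪ Q.support with hS
  refine ⟨S.card, ?_⟩
  intro ω d h₁ h₂ hω hd hh₁ hh₂ hdh
  set m : Fin S.card → (Fin 5 →₀ ℕ) := fun i => (S.equivFin.symm i : Fin 5 →₀ ℕ) with hm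
  set α : Fin S.card → EuclideanSpace ℝ (Fin 2) → ℂ := fun i x =>
    (((x 1 / (2 * π / ω * Real.sqrt d)) ^ (m i) 0 *
      (x 0 / (d * (2 * π / ω))) ^ (m i) 2 : ℝ) : ℂ) with hα
  set β : Fin S.card → EuclideanSpace ℝ (Fin 2) → ℂ := fun i y =>
    (((P.coeff (m i) : ℝ) : ℂ) + Complex.I * ((Q.coeff (m i) : ℝ) : ℂ)) *
      (((y 1 / (2 * π / ω * Real.sqrt d)) ^ (m i) 1 *
        (y 0 / (d * (2 * π / ω))) ^ (m i) 3 * d⁻¹ ^ (m i) 4 : ℝ) : ℂ) with hβ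
  refine ⟨α, β, ?_⟩
  intro x hx y hy
  set u : Fin 5 → ℝ :=
    ![x 1 / (2 * π / ω * Real.sqrt d), y 1 / (2 * π / ω * Real.sqrt d),
      x 0 / (d * (2 * π / ω)), y 0 / (d * (2 * π / ω)), d⁻¹] with hu
  have hu0 : u 0 = x 1 / (2 * π / ω * Real.sqrt d) := rfl
  have hu1 : u 1 = y 1 / (2 * π / ω * Real.sqrt d) := rfl
  have hu2 : u 2 = x 0 / (d * (2 * π / ω)) := rfl
  have hu3 : u 3 = y 0 / (d * (2 * π / ω)) := rfl
  have hu4 : u 4 = d⁻¹ := rfl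
  have hmem : u ∈ Kset := by
    have := mem_aux ω d h₁ h₂ hω hd hh₁ hh₂ hdh x y hx hy
    rwa [← hu] at this
  have hphase : ω * (‖x - y‖ - (x 0 - y 0)) = 2 * π * phi u := by
    have := phase_vec ω d h₁ h₂ hω hd x y hx hy
    rwa [← hu] at this
  have hexp : Complex.exp (Complex.I * ((ω * (‖x - y‖ - (x 0 - y 0)) : ℝ) : ℂ)) =
      ((Real.cos (2 * π * phi u) : ℝ) : ℂ) +
        ((Real.sin (2 * π * phi u) : ℝ) : ℂ) * Complex.I := by
    rw [hphase, mul_comm Complex.I, Complex.exp_mul_I]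
    rw [← Complex.ofReal_cos, ← Complex.ofReal_sin]
  have hterm : ∀ i : Fin S.card, α i x * β i y =
      (((P.coeff (m i) : ℝ) : ℂ) + Complex.I * ((Q.coeff (m i) : ℝ) : ℂ)) *
        ((∏ j, u j ^ (m i) j : ℝ) : ℂ) := by
    intro i
    simp only [hα, hβ]
    rw [Fin.prod_univ_five, hu0, hu1, hu2, hu3, hu4]
    push_cast
    ring
  have hsum2 : ∑ i : Fin S.card, (((P.coeff (m i) : ℝ) : ℂ) +
        Complex.I * ((Q.coeff (m i) : ℝ) : ℂ)) * ((∏ j, u j ^ (m i) j : ℝ) : ℂ)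
      = ∑ n ∈ S, (((P.coeff n : ℝ) : ℂ) + Complex.I * ((Q.coeff n : ℝ) : ℂ)) *
        ((∏ j, u j ^ n j : ℝ) : ℂ) := by
    rw [← Finset.sum_coe_sort S (fun n => (((P.coeff n : ℝ) : ℂ) +
      Complex.I * ((Q.coeff n : ℝ) : ℂ)) * ((∏ j, u j ^ n j : ℝ) : ℂ))]
    exact (Fintype.sum_equiv S.equivFin _ _ (fun a => by simp [hm])).symm
  have hPsum : MvPolynomial.eval u P = ∑ n ∈ S, P.coeff n * ∏ j, u j ^ n j := by
    rw [MvPolynomial.eval_eq']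
    exact Finset.sum_subset Finset.subset_union_left (fun n _ hn => by
      rw [MvPolynomial.notMem_support_iff.mp hn, zero_mul])
  have hQsum : MvPolynomial.eval u Q = ∑ n ∈ S, Q.coeff n * ∏ j, u j ^ n j := by
    rw [MvPolynomial.eval_eq']
    exact Finset.sum_subset Finset.subset_union_right (fun n _ hn => by
      rw [MvPolynomial.notMem_support_iff.mp hn, zero_mul])
  have hsum : ∑ i, α i x * β i y
      = ((MvPolynomial.eval u P : ℝ) : ℂ) +
        Complex.I * ((MvPolynomial.eval u Q : ℝ) : ℂ) := by
    calc ∑ i, α i x * β i y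
        = ∑ i : Fin S.card, (((P.coeff (m i) : ℝ) : ℂ) +
            Complex.I * ((Q.coeff (m i) : ℝ) : ℂ)) * ((∏ j, u j ^ (m i) j : ℝ) : ℂ) :=
          Finset.sum_congr rfl (fun i _ => hterm i)
      _ = ∑ n ∈ S, (((P.coeff n : ℝ) : ℂ) + Complex.I * ((Q.coeff n : ℝ) : ℂ)) *
            ((∏ j, u j ^ n j : ℝ) : ℂ) := hsum2
      _ = ((MvPolynomial.eval u P : ℝ) : ℂ) +
            Complex.I * ((MvPolynomial.eval u Q : ℝ) : ℂ) := by
          rw [hPsum, hQsum]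
          push_cast
          rw [Finset.mul_sum, ← Finset.sum_add_distrib]
          exact Finset.sum_congr rfl (fun n _ => by ring)
  have hcos := hP u hmem
  have hsin := hQ u hmem
  have key : Complex.exp (Complex.I * ((ω * (‖x - y‖ - (x 0 - y 0)) : ℝ) : ℂ)) -
      ∑ i, α i x * β i y
      = ((Real.cos (2 * π * phi u) - MvPolynomial.eval u P : ℝ) : ℂ) +
        ((Real.sin (2 * π * phi u) - MvPolynomial.eval u Q : ℝ) : ℂ) * Complex.I := by
    rw [hexp, hsum]
    push_cast
    ring
  rw [key]
  calc ‖(((Real.cos (2 * π * phi u) - MvPolynomial.eval u P : ℝ) : ℂ) +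
        ((Real.sin (2 * π * phi u) - MvPolynomial.eval u Q : ℝ) : ℂ) * Complex.I)‖
      ≤ ‖(((Real.cos (2 * π * phi u) - MvPolynomial.eval u P : ℝ) : ℂ))‖ +
        ‖(((Real.sin (2 * π * phi u) - MvPolynomial.eval u Q : ℝ) : ℂ) *
          Complex.I)‖ := norm_add_le _ _
    _ = |Real.cos (2 * π * phi u) - MvPolynomial.eval u P| +
        |Real.sin (2 * π * phi u) - MvPolynomial.eval u Q| := by
        rw [norm_mul, Complex.norm_I, mul_one, Complex.norm_real, Complex.norm_real, Real.norm_eq_abs,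
          Real.norm_eq_abs]
    _ ≤ ε / 2 + ε / 2 := add_le_add hcos hsin
    _ = ε := by ring
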